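/- Let C be a closed model category. Given a commutative square in Prod(C) with left vertical morphism f a cofibration and right vertical morphism g an acyclic fibration (a fibration which is also a weak equivalence), there exists a diagonal morphism h from the bottom-left object to the top-right object making both triangles commute. That is, cofibrations in Prod(C) have the left lifting property with respect to acyclic fibrations. -/

import Mathlib

open CategoryTheory Limits

universe v u

/-- The category of formal products of objects of `C`. -/
structure FormalProd (C : Type u) [Category.{v} C] : Type (max u (v + 1)) where
  ι : Type v
  obj : ι → C

namespace FormalProd

variable {C : Type u} [Category.{v} C]

instance : Category.{v} (FormalProd C) where
  Hom A B := Σ r : B.ι → A.ι, ∀ j : B.ι, A.obj (r j) ⟶ B.obj j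
  id A := ⟨fun i => i, fun i => 𝟙 (A.obj i)⟩
  comp {A B D} f g := ⟨fun k => f.1 (g.1 k), fun k => f.2 (g.1 k) ≫ g.2 k⟩
  id_comp f := by obtain ⟨r, φ⟩ := f; simp
  comp_id f := by obtain ⟨r, φ⟩ := f; simp
  assoc f g h := by simp

/-- The index map of a morphism of formal products. -/
def Hom.index {A B : FormalProd C} (f : A ⟶ B) : B.ι → A.ι := f.1

/-- The components of a morphism of formal products. -/
def Hom.component {A B : FormalProd C} (f : A ⟶ B) (j : B.ι) :
    A.obj (Hom.index f j) ⟶ B.obj j := f.2 j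

end FormalProd

/-- A closed model category structure on `C` (Quillen): three classes of morphisms—
cofibrations, fibrations and weak equivalences—each containing the identities and
closed under composition and retracts; weak equivalences satisfy two-out-of-three;
(acyclic) cofibrations have the left lifting property with respect to (acyclic)
fibrations; and every morphism factors as a cofibration followed by an acyclic
fibration and as an acyclic cofibration followed by a fibration.  (The requirement
that `C` have all small limits and colimits is imposed separately via
`HasLimits C` and `HasColimits C`.) -/
structure ClosedModelStructure (C : Type u) [Category.{v} C] where
  cof : MorphismProperty C
  fib : MorphismProperty C
  weq : MorphismProperty C
  cof_id : ∀ X : C, cof (𝟙 X)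
  fib_id : ∀ X : C, fib (𝟙 X)
  weq_id : ∀ X : C, weq (𝟙 X)
  cof_comp : ∀ {X Y Z : C} (f : X ⟶ Y) (g : Y ⟶ Z), cof f → cof g → cof (f ≫ g)
  fib_comp : ∀ {X Y Z : C} (f : X ⟶ Y) (g : Y ⟶ Z), fib f → fib g → fib (f ≫ g)
  weq_comp : ∀ {X Y Z : C} (f : X ⟶ Y) (g : Y ⟶ Z), weq f → weq g → weq (f ≫ g)
  weq_of_comp_right : ∀ {X Y Z : C} (f : X ⟶ Y) (g : Y ⟶ Z),
    weq f → weq (f ≫ g) → weq g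
  weq_of_comp_left : ∀ {X Y Z : C} (f : X ⟶ Y) (g : Y ⟶ Z),
    weq g → weq (f ≫ g) → weq f
  cof_retract : ∀ {A A' B B' : C} (f : A ⟶ A') (g : B ⟶ B')
    (i : A ⟶ B) (r : B ⟶ A) (i' : A' ⟶ B') (r' : B' ⟶ A'),
    i ≫ r = 𝟙 A → i' ≫ r' = 𝟙 A' → i ≫ g = f ≫ i' → r ≫ f = g ≫ r' →
    cof g → cof f
  fib_retract : ∀ {A A' B B' : C} (f : A ⟶ A') (g : B ⟶ B')
    (i : A ⟶ B) (r : B ⟶ A) (i' : A' ⟶ B') (r' : B' ⟶ A'),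
    i ≫ r = 𝟙 A → i' ≫ r' = 𝟙 A' → i ≫ g = f ≫ i' → r ≫ f = g ≫ r' →
    fib g → fib f
  weq_retract : ∀ {A A' B B' : C} (f : A ⟶ A') (g : B ⟶ B')
    (i : A ⟶ B) (r : B ⟶ A) (i' : A' ⟶ B') (r' : B' ⟶ A'),
    i ≫ r = 𝟙 A → i' ≫ r' = 𝟙 A' → i ≫ g = f ≫ i' → r ≫ f = g ≫ r' →
    weq g → weq f
  lift_cof_acyclicFib : ∀ {A B X Y : C} (f : A ⟶ B) (g : X ⟶ Y) (u : A ⟶ X)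
    (v : B ⟶ Y), cof f → fib g → weq g → u ≫ g = f ≫ v →
    ∃ h : B ⟶ X, f ≫ h = u ∧ h ≫ g = v
  lift_acyclicCof_fib : ∀ {A B X Y : C} (f : A ⟶ B) (g : X ⟶ Y) (u : A ⟶ X)
    (v : B ⟶ Y), cof f → weq f → fib g → u ≫ g = f ≫ v →
    ∃ h : B ⟶ X, f ≫ h = u ∧ h ≫ g = v
  fact_cof_acyclicFib : ∀ {X Y : C} (f : X ⟶ Y),
    ∃ (Z : C) (i : X ⟶ Z) (p : Z ⟶ Y), cof i ∧ fib p ∧ weq p ∧ i ≫ p = f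
  fact_acyclicCof_fib : ∀ {X Y : C} (f : X ⟶ Y),
    ∃ (Z : C) (i : X ⟶ Z) (p : Z ⟶ Y), cof i ∧ weq i ∧ fib p ∧ i ≫ p = f

namespace FormalProd

variable {C : Type u} [Category.{v} C]

/-- A morphism of `Prod(C)` is a *cofibration* if all of its components are
cofibrations in `C`. -/
def prodCof (M : ClosedModelStructure C) : MorphismProperty (FormalProd C) :=
  fun _ B f => ∀ j : B.ι, M.cof (f.2 j)

/-- A morphism of `Prod(C)` is a *weak equivalence* if its index map is a bijection
and all of its components are weak equivalences in `C`. -/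
def prodWeq (M : ClosedModelStructure C) : MorphismProperty (FormalProd C) :=
  fun _ B f => Function.Bijective f.1 ∧ ∀ j : B.ι, M.weq (f.2 j)

/-- For a morphism `f : ∏_{i∈I} A_i ⟶ ∏_{j∈J} B_j` of `Prod(C)` and `i ∈ I`, the
induced morphism `f^i : A_i ⟶ ∏ { B_j | i_j = i }` into the product in `C` of the
`B_j` over those `j` with `i_j = i`, whose components are the `f_j` with `i_j = i`. -/
noncomputable def fiberMap [HasLimits C] {A B : FormalProd C} (f : A ⟶ B) (i : A.ι) :
    A.obj i ⟶ ∏ᶜ (fun j : {j : B.ι // f.1 j = i} => B.obj j.1) :=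
  Pi.lift fun j => eqToHom (congrArg A.obj j.2.symm) ≫ f.2 j.1

/-- A morphism `f` of `Prod(C)` is a *fibration* if for every index `i` of the source
the induced morphism `f^i` is a fibration in `C`. -/
def prodFib [HasLimits C] (M : ClosedModelStructure C) :
    MorphismProperty (FormalProd C) :=
  fun A _ f => ∀ i : A.ι, M.fib (fiberMap f i)

/-- Extensionality for morphisms of formal products. -/
lemma hom_ext' {A B : FormalProd C} {p q : A ⟶ B} (h1 : ∀ j, p.1 j = q.1 j)
    (h2 : ∀ j, p.2 j = eqToHom (congrArg A.obj (h1 j)) ≫ q.2 j) : p = q := by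
  obtain ⟨r, φ⟩ := p
  obtain ⟨r', φ'⟩ := q
  have hr : r = r' := funext h1
  subst hr
  exact congrArg (Sigma.mk r) (funext fun j => by simpa using h2 j)

lemma sigma_hom_eq {I : Type*} (F : I → C) {Z : C} {i i' : I} {p : F i ⟶ Z}
    {q : F i' ⟶ Z} (h : (⟨i, p⟩ : Σ n, F n ⟶ Z) = ⟨i', q⟩) :
    ∃ hi : i = i', p = eqToHom (congrArg F hi) ≫ q := by
  rw [Sigma.mk.inj_iff] at h
  obtain ⟨hi, hp⟩ := h
  subst hi
  exact ⟨rfl, by simpa using eq_of_heq hp⟩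

end FormalProd

open FormalProd in
/-- Cofibrations in `Prod(C)` have the left lifting property with respect to acyclic
fibrations: given a commutative square `u ≫ g = f ≫ v` with `f` a cofibration and
`g` a fibration which is also a weak equivalence, there is a diagonal `h` making
both triangles commute. -/
theorem formalProd_llp_cof_acyclicFib (C : Type u) [Category.{v} C]
    [HasLimits C] [HasColimits C] (M : ClosedModelStructure C)
    {A B X Y : FormalProd C} (f : A ⟶ B) (g : X ⟶ Y) (u : A ⟶ X) (v : B ⟶ Y)
    (hf : prodCof M f) (hg : prodFib M g) (hg' : prodWeq M g)
    (hsq : u ≫ g = f ≫ v) :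
    ∃ h : B ⟶ X, f ≫ h = u ∧ h ≫ g = v := by
  classical
  -- the index map of `g` is a bijection
  have hbij := hg'.1
  set e : Y.ι ≃ X.ι := Equiv.ofBijective g.1 hbij with he
  -- each component of `g` is a fibration (retract of a fiber map)
  have gfib : ∀ k : Y.ι, M.fib (g.2 k) := by
    intro k
    refine M.fib_retract (g.2 k) (fiberMap g (g.1 k)) (𝟙 _) (𝟙 _)
      (Pi.lift (fun j : {j : Y.ι // g.1 j = g.1 k} =>
        eqToHom (congrArg Y.obj (hbij.1 j.2).symm)))
      (Pi.π _ (⟨k, rfl⟩ : {j : Y.ι // g.1 j = g.1 k})) ?_ ?_ ?_ ?_ (hg (g.1 k))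
    · simp
    · simp
    · apply Pi.hom_ext
      intro j
      obtain ⟨j1, hj⟩ := j
      have hjk : j1 = k := hbij.1 hj
      subst hjk
      simp [fiberMap]
    · simp [fiberMap]
  -- extract the componentwise commutativity of the square
  have key : ∀ k : Y.ι, ∃ hi : u.1 (g.1 k) = f.1 (v.1 k),
      u.2 (g.1 k) ≫ g.2 k = eqToHom (congrArg A.obj hi) ≫ (f.2 (v.1 k) ≫ v.2 k) := by
    intro k
    have := congrArg (fun t : (A ⟶ Y) =>
      (⟨t.1 k, t.2 k⟩ : Σ i, A.obj i ⟶ Y.obj k)) hsq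
    exact sigma_hom_eq A.obj this
  have hidx : ∀ k : Y.ι, u.1 (g.1 k) = f.1 (v.1 k) := fun k => (key k).1
  -- componentwise lifts
  have lifts : ∀ k : Y.ι, ∃ ℓ : B.obj (v.1 k) ⟶ X.obj (g.1 k),
      f.2 (v.1 k) ≫ ℓ = eqToHom (congrArg A.obj (hidx k).symm) ≫ u.2 (g.1 k) ∧
      ℓ ≫ g.2 k = v.2 k := by
    intro k
    obtain ⟨hi, hcomm⟩ := key k
    refine M.lift_cof_acyclicFib (f.2 (v.1 k)) (g.2 k)
      (eqToHom (congrArg A.obj (hidx k).symm) ≫ u.2 (g.1 k)) (v.2 k)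
      (hf (v.1 k)) (gfib k) (hg'.2 k) ?_
    rw [Category.assoc, hcomm, ← Category.assoc, eqToHom_trans, eqToHom_refl,
      Category.id_comp]
  choose ℓ hℓ1 hℓ2 using lifts
  -- the diagonal morphism
  refine ⟨⟨fun x => v.1 (e.symm x),
    fun x => ℓ (e.symm x) ≫ eqToHom (congrArg X.obj (e.apply_symm_apply x))⟩, ?_, ?_⟩
  · -- upper triangle
    have aux1 : ∀ (k : Y.ι) (x : X.ι) (hx : g.1 k = x),
        f.2 (v.1 k) ≫ (ℓ k ≫ eqToHom (congrArg X.obj hx)) =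
          eqToHom (congrArg A.obj ((hidx k).symm.trans (congrArg u.1 hx))) ≫ u.2 x := by
      intro k x hx
      subst hx
      simpa using hℓ1 k
    refine hom_ext' (fun x => (hidx (e.symm x)).symm.trans
      (congrArg u.1 (e.apply_symm_apply x))) ?_
    intro x
    exact aux1 (e.symm x) x (e.apply_symm_apply x)
  · -- lower triangle
    have aux2 : ∀ (k k' : Y.ι) (hk : k' = k) (hx : g.1 k' = g.1 k),
        (ℓ k' ≫ eqToHom (congrArg X.obj hx)) ≫ g.2 k =
          eqToHom (congrArg B.obj (congrArg v.1 hk)) ≫ v.2 k := by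
      intro k k' hk hx
      subst hk
      simpa using hℓ2 k'
    refine hom_ext' (fun k => congrArg v.1 (e.symm_apply_apply k)) ?_
    intro k
    exact aux2 k (e.symm (g.1 k)) (e.symm_apply_apply k)
      (congrArg g.1 (e.symm_apply_apply k))
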